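/- Fix γ ≥ 0, κ > 0 and suppose η > 0 is such that for every w ∈ W, x ∈ X and j ∈ {1,…,K}, Δ_w(x,j) ≤ γ implies g^w_{γ,κ}(x,j) ≥ η (for the logistic gate one may take η = 1/2). Then for every probability measure Q on W, the posterior margin-failure risk satisfies R_{mf,γ}(Q;D') ≤ η^{−1} (1 + e^{γ}) · VWR_γ(Q;D'). -/

import Mathlib

open MeasureTheory

/-- Option margin: `Δ_s(y) = s(y) - max_{k ≠ y} s(k)`. -/
noncomputable def optionMargin {K : ℕ} (s : Fin K → ℝ) (y : Fin K) : ℝ :=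
  s y - ⨆ k : {k : Fin K // k ≠ y}, s k.1

/-- Softmax probability `p_s(i) = exp(s i) / Σ_k exp(s k)`. -/
noncomputable def softmaxProb {K : ℕ} (s : Fin K → ℝ) (i : Fin K) : ℝ :=
  Real.exp (s i) / ∑ k : Fin K, Real.exp (s k)

/-- Margin gate `g_{γ,κ}(Δ) = σ((γ - Δ)/κ)` with the logistic sigmoid. -/
noncomputable def gate (γ κ Δ : ℝ) : ℝ := 1 / (1 + Real.exp (-((γ - Δ) / κ)))

/-- Posterior-averaged margin-aware error-flow matrix `M̄^Q_{D',γ}`: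
entry `(i,j)` is `E_{w∼Q} E_{x∼D'_j}[g^w_{γ,κ}(x,j) p_w(i|x)]` for `i ≠ j`, zero diagonal. -/
noncomputable def Mbar {X W : Type*} [MeasurableSpace X] [MeasurableSpace W] {K : ℕ}
    (D : Fin K → Measure X) (s : W → X → Fin K → ℝ) (γ κ : ℝ) (Q : Measure W) :
    Matrix (Fin K) (Fin K) ℝ := fun i j =>
  if i = j then 0
  else ∫ w, ∫ x, gate γ κ (optionMargin (s w x) j) * softmaxProb (s w x) i ∂(D j) ∂Q

/-- Vulnerable worst-option risk `VWR_γ(Q;D') = ‖M̄^Q_{D',γ}‖₁` (max column absolute sum). -/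
noncomputable def VWR {X W : Type*} [MeasurableSpace X] [MeasurableSpace W] {K : ℕ}
    (D : Fin K → Measure X) (s : W → X → Fin K → ℝ) (γ κ : ℝ) (Q : Measure W) : ℝ :=
  ⨆ j : Fin K, ∑ i : Fin K, |Mbar D s γ κ Q i j|

/-- Posterior margin-failure risk
`R_{mf,γ}(Q;D') = max_j E_{x∼D'_j}[Q({w : Δ_w(x,j) ≤ γ})]`. -/
noncomputable def Rmf {X W : Type*} [MeasurableSpace X] [MeasurableSpace W] {K : ℕ}
    (D : Fin K → Measure X) (s : W → X → Fin K → ℝ) (γ : ℝ) (Q : Measure W) : ℝ :=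
  ⨆ j : Fin K, ∫ x, (Q {w | optionMargin (s w x) j ≤ γ}).toReal ∂(D j)

section Aux

open Finset

lemma gate_pos (γ κ Δ : ℝ) : 0 < gate γ κ Δ := by
  unfold gate
  positivity

lemma gate_le_one (γ κ Δ : ℝ) : gate γ κ Δ ≤ 1 := by
  unfold gate
  rw [div_le_one (by positivity)]
  nlinarith [Real.exp_pos (-((γ - Δ) / κ))]

lemma softmaxProb_nonneg {K : ℕ} (s : Fin K → ℝ) (i : Fin K) : 0 ≤ softmaxProb s i := by
  unfold softmaxProb
  have : 0 ≤ ∑ k : Fin K, Real.exp (s k) :=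
    Finset.sum_nonneg fun k _ => (Real.exp_pos _).le
  positivity

lemma softmaxProb_le_one {K : ℕ} (s : Fin K → ℝ) (i : Fin K) : softmaxProb s i ≤ 1 := by
  unfold softmaxProb
  have hpos : 0 < ∑ k : Fin K, Real.exp (s k) := by
    refine Finset.sum_pos (fun k _ => Real.exp_pos _) ⟨i, Finset.mem_univ i⟩
  rw [div_le_one hpos]
  exact Finset.single_le_sum (fun k _ => (Real.exp_pos (s k)).le) (Finset.mem_univ i)

/-- Key pointwise inequality: if the margin fails, the total softmax mass off `j`
is at least `1/(1+e^γ)`. -/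
lemma one_le_offmass {K : ℕ} (hK : 2 ≤ K) (s : Fin K → ℝ) (j : Fin K) {γ : ℝ}
    (hΔ : optionMargin s j ≤ γ) :
    1 ≤ (1 + Real.exp γ) * ∑ i ∈ Finset.univ.erase j, softmaxProb s i := by
  haveI : Nontrivial (Fin K) := Fin.nontrivial_iff_two_le.mpr hK
  haveI hne : Nonempty {k : Fin K // k ≠ j} := by
    obtain ⟨k, hk⟩ := exists_ne j
    exact ⟨⟨k, hk⟩⟩
  set A : ℝ := ∑ i ∈ Finset.univ.erase j, Real.exp (s i) with hA
  set E : ℝ := ∑ k : Fin K, Real.exp (s k) with hE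
  have hEpos : 0 < E := Finset.sum_pos (fun k _ => Real.exp_pos _) ⟨j, Finset.mem_univ j⟩
  have hAE : A + Real.exp (s j) = E := Finset.sum_erase_add _ _ (Finset.mem_univ j)
  -- the sup is attained
  have hsup : (⨆ k : {k : Fin K // k ≠ j}, s k.1)
      = Finset.univ.sup' Finset.univ_nonempty (fun k : {k : Fin K // k ≠ j} => s k.1) :=
    (Finset.sup'_univ_eq_ciSup _).symm
  obtain ⟨k₀, -, hk₀⟩ := Finset.exists_mem_eq_sup' (Finset.univ_nonempty)
      (fun k : {k : Fin K // k ≠ j} => s k.1)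
  have hexpA : Real.exp (⨆ k : {k : Fin K // k ≠ j}, s k.1) ≤ A := by
    rw [hsup, hk₀]
    exact Finset.single_le_sum (f := fun i => Real.exp (s i))
      (fun i _ => (Real.exp_pos _).le) (Finset.mem_erase.mpr ⟨k₀.2, Finset.mem_univ _⟩)
  have hsj : Real.exp (s j) ≤ Real.exp γ * A := by
    have h1 : s j ≤ γ + (⨆ k : {k : Fin K // k ≠ j}, s k.1) := by
      have := hΔ; unfold optionMargin at this; linarith
    calc Real.exp (s j) ≤ Real.exp (γ + (⨆ k : {k : Fin K // k ≠ j}, s k.1)) :=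
          Real.exp_le_exp.mpr h1
      _ = Real.exp γ * Real.exp (⨆ k : {k : Fin K // k ≠ j}, s k.1) := Real.exp_add _ _
      _ ≤ Real.exp γ * A := by
          exact mul_le_mul_of_nonneg_left hexpA (Real.exp_pos γ).le
  have hsum : ∑ i ∈ Finset.univ.erase j, softmaxProb s i = A / E := by
    unfold softmaxProb
    rw [← Finset.sum_div]
  rw [hsum]
  rw [mul_div_assoc'] at *
  rw [le_div_iff₀ hEpos, one_mul]
  nlinarith [hsj, hAE]

lemma measurable_optionMargin {W X : Type*} [MeasurableSpace W] [MeasurableSpace X] {K : ℕ}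
    (hK : 2 ≤ K) (s : W → X → Fin K → ℝ)
    (hs : ∀ k : Fin K, Measurable fun p : W × X => s p.1 p.2 k) (j : Fin K) :
    Measurable fun p : W × X => optionMargin (s p.1 p.2) j := by
  haveI : Nontrivial (Fin K) := Fin.nontrivial_iff_two_le.mpr hK
  haveI hne : Nonempty {k : Fin K // k ≠ j} := by
    obtain ⟨k, hk⟩ := exists_ne j
    exact ⟨⟨k, hk⟩⟩
  have heq : (fun p : W × X => optionMargin (s p.1 p.2) j)
      = fun p : W × X => s p.1 p.2 j -
        (Finset.univ.sup' Finset.univ_nonempty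
          (fun (k : {k : Fin K // k ≠ j}) (p : W × X) => s p.1 p.2 k.1)) p := by
    funext p
    rw [optionMargin, Finset.sup'_apply, Finset.sup'_univ_eq_ciSup]
  rw [heq]
  exact (hs j).sub (Finset.measurable_sup' Finset.univ_nonempty fun k _ => hs k.1)

lemma measurable_softmaxProb {W X : Type*} [MeasurableSpace W] [MeasurableSpace X] {K : ℕ}
    (s : W → X → Fin K → ℝ)
    (hs : ∀ k : Fin K, Measurable fun p : W × X => s p.1 p.2 k) (i : Fin K) :
    Measurable fun p : W × X => softmaxProb (s p.1 p.2) i := by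
  unfold softmaxProb
  exact ((hs i).exp).div (Finset.measurable_sum _ fun k _ => (hs k).exp)

lemma continuous_gate (γ κ : ℝ) : Continuous fun Δ : ℝ => gate γ κ Δ := by
  unfold gate
  refine continuous_const.div ?_ fun t => ?_
  · fun_prop
  · positivity

end Aux

/-- Margin failure is controlled by vulnerable mass:
`R_{mf,γ}(Q;D') ≤ η⁻¹ (1+e^γ) VWR_γ(Q;D')` when the gate is at least `η` on failure. -/
theorem marginFailure_le_vulnerableMass {X W : Type*} [MeasurableSpace X] [MeasurableSpace W]
    {K : ℕ} (hK : 2 ≤ K)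
    (D : Fin K → Measure X) (hD : ∀ j, IsProbabilityMeasure (D j))
    (s : W → X → Fin K → ℝ)
    (hs : ∀ k : Fin K, Measurable fun p : W × X => s p.1 p.2 k)
    (γ κ η : ℝ) (hγ : 0 ≤ γ) (hκ : 0 < κ) (hη : 0 < η)
    (hgate : ∀ (w : W) (x : X) (j : Fin K),
      optionMargin (s w x) j ≤ γ → η ≤ gate γ κ (optionMargin (s w x) j))
    (Q : Measure W) (hQ : IsProbabilityMeasure Q) :
    Rmf D s γ Q ≤ η⁻¹ * (1 + Real.exp γ) * VWR D s γ κ Q := by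
  haveI : Nonempty (Fin K) := ⟨⟨0, by omega⟩⟩
  set C := η⁻¹ * (1 + Real.exp γ) with hCdef
  have hC : 0 ≤ C := mul_nonneg (inv_nonneg.mpr hη.le) (by positivity)
  rw [Rmf]
  refine ciSup_le fun j => ?_
  haveI := hD j
  set T : Set (W × X) := {p : W × X | optionMargin (s p.1 p.2) j ≤ γ} with hTdef
  have hm : Measurable fun p : W × X => optionMargin (s p.1 p.2) j :=
    measurable_optionMargin hK s hs j
  have hTmeas : MeasurableSet T := hm measurableSet_Iic
  set G : W × X → ℝ := fun p => gate γ κ (optionMargin (s p.1 p.2) j) with hGdef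
  set P : Fin K → W × X → ℝ := fun i p => softmaxProb (s p.1 p.2) i with hPdef
  have hGmeas : Measurable G := (continuous_gate γ κ).measurable.comp hm
  have hPmeas : ∀ i, Measurable (P i) := fun i => measurable_softmaxProb s hs i
  set f : W × X → ℝ := fun p => ∑ i ∈ Finset.univ.erase j, G p * P i p with hfdef
  have hGP_nonneg : ∀ (i : Fin K) (p : W × X), 0 ≤ G p * P i p := fun i p =>
    mul_nonneg (gate_pos _ _ _).le (softmaxProb_nonneg _ _)
  have hGP_le : ∀ (i : Fin K) (p : W × X), ‖G p * P i p‖ ≤ 1 := by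
    intro i p
    rw [Real.norm_eq_abs, abs_of_nonneg (hGP_nonneg i p)]
    exact mul_le_one₀ (gate_le_one _ _ _) (softmaxProb_nonneg _ _) (softmaxProb_le_one _ _)
  have hterm_int : ∀ i : Fin K, Integrable (fun p => G p * P i p) (Q.prod (D j)) := fun i =>
    (integrable_const (1 : ℝ)).mono' ((hGmeas.mul (hPmeas i)).aestronglyMeasurable)
      (Filter.Eventually.of_forall fun p => hGP_le i p)
  have hf_int : Integrable f (Q.prod (D j)) := integrable_finset_sum _ fun i _ => hterm_int i
  have hInd_int : Integrable (T.indicator fun _ => (1 : ℝ)) (Q.prod (D j)) :=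
    (integrable_const 1).indicator hTmeas
  have hterm_sec : ∀ (i : Fin K) (w : W), Integrable (fun x => G (w, x) * P i (w, x)) (D j) :=
    fun i w =>
    (integrable_const (1 : ℝ)).mono'
      (((hGmeas.mul (hPmeas i)).comp measurable_prodMk_left).aestronglyMeasurable)
      (Filter.Eventually.of_forall fun x => hGP_le i (w, x))
  have hf_sec : ∀ w, Integrable (fun x => f (w, x)) (D j) :=
    fun w => integrable_finset_sum _ fun i _ => hterm_sec i w
  have hInd_sec : ∀ w, Integrable (fun x => T.indicator (fun _ => (1 : ℝ)) (w, x)) (D j) := by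
    intro w
    have heq : (fun x => T.indicator (fun _ => (1 : ℝ)) (w, x))
        = ((Prod.mk w) ⁻¹' T).indicator (fun _ => (1 : ℝ)) := by
      funext x
      by_cases h : (w, x) ∈ T <;>
        simp [Set.indicator_apply, Set.mem_preimage, h]
    rw [heq]
    exact (integrable_const 1).indicator (hTmeas.preimage measurable_prodMk_left)
  have hkey : ∀ p : W × X, T.indicator (fun _ => (1 : ℝ)) p ≤ C * f p := by
    intro p
    have hf_nonneg : 0 ≤ f p := Finset.sum_nonneg fun i _ => hGP_nonneg i p
    by_cases hp : p ∈ T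
    · rw [Set.indicator_of_mem hp]
      have hΔ : optionMargin (s p.1 p.2) j ≤ γ := hp
      have h1 : η * ∑ i ∈ Finset.univ.erase j, P i p ≤ f p := by
        rw [hfdef, Finset.mul_sum]
        exact Finset.sum_le_sum fun i _ =>
          mul_le_mul_of_nonneg_right (hgate p.1 p.2 j hΔ) (softmaxProb_nonneg _ _)
      have h2 := one_le_offmass hK (s p.1 p.2) j hΔ
      calc (1 : ℝ) ≤ (1 + Real.exp γ) * ∑ i ∈ Finset.univ.erase j, softmaxProb (s p.1 p.2) i :=
            h2
        _ = C * (η * ∑ i ∈ Finset.univ.erase j, P i p) := by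
            rw [hCdef, hPdef]
            field_simp
        _ ≤ C * f p := mul_le_mul_of_nonneg_left h1 hC
    · rw [Set.indicator_of_notMem hp]
      exact mul_nonneg hC hf_nonneg
  calc ∫ x, (Q {w | optionMargin (s w x) j ≤ γ}).toReal ∂(D j)
      = ∫ x, ∫ w, T.indicator (fun _ => (1 : ℝ)) (w, x) ∂Q ∂(D j) := by
        refine integral_congr_ae (Filter.Eventually.of_forall fun x => ?_)
        show (Q {w | optionMargin (s w x) j ≤ γ}).toReal
          = ∫ w, T.indicator (fun _ => (1 : ℝ)) (w, x) ∂Q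
        have hSx : MeasurableSet {w | optionMargin (s w x) j ≤ γ} :=
          (hm.comp measurable_prodMk_right) measurableSet_Iic
        rw [← Measure.real_def, ← integral_indicator_one hSx]
        refine integral_congr_ae (Filter.Eventually.of_forall fun w => ?_)
        simp only [hTdef, Set.indicator_apply, Set.mem_setOf_eq, Pi.one_apply]
    _ = ∫ w, ∫ x, T.indicator (fun _ => (1 : ℝ)) (w, x) ∂(D j) ∂Q :=
        (integral_integral_swap (μ := Q) (ν := D j)
          (f := fun w x => T.indicator (fun _ => (1 : ℝ)) (w, x)) hInd_int).symm
    _ ≤ ∫ w, ∫ x, C * f (w, x) ∂(D j) ∂Q := by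
        refine integral_mono hInd_int.integral_prod_left
          (hf_int.const_mul C).integral_prod_left fun w => ?_
        exact integral_mono (hInd_sec w) ((hf_sec w).const_mul C) fun x => hkey (w, x)
    _ = C * ∫ w, ∫ x, f (w, x) ∂(D j) ∂Q := by
        simp_rw [integral_const_mul]
    _ = C * ∑ i ∈ Finset.univ.erase j, ∫ w, ∫ x, G (w, x) * P i (w, x) ∂(D j) ∂Q := by
        congr 1
        calc ∫ w, ∫ x, f (w, x) ∂(D j) ∂Q
            = ∫ w, ∑ i ∈ Finset.univ.erase j, ∫ x, G (w, x) * P i (w, x) ∂(D j) ∂Q := by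
              refine integral_congr_ae (Filter.Eventually.of_forall fun w => ?_)
              exact integral_finset_sum _ fun i _ => hterm_sec i w
          _ = ∑ i ∈ Finset.univ.erase j, ∫ w, ∫ x, G (w, x) * P i (w, x) ∂(D j) ∂Q :=
              integral_finset_sum _ fun i _ => (hterm_int i).integral_prod_left
    _ = C * ∑ i ∈ Finset.univ.erase j, |Mbar D s γ κ Q i j| := by
        congr 1
        refine Finset.sum_congr rfl fun i hi => ?_
        have hij : i ≠ j := (Finset.mem_erase.mp hi).1
        have hMeq : Mbar D s γ κ Q i j
            = ∫ w, ∫ x, G (w, x) * P i (w, x) ∂(D j) ∂Q := by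
          simp only [Mbar, if_neg hij, hGdef, hPdef]
        rw [hMeq, abs_of_nonneg]
        exact integral_nonneg fun w => integral_nonneg fun x => hGP_nonneg i (w, x)
    _ ≤ C * ∑ i : Fin K, |Mbar D s γ κ Q i j| :=
        mul_le_mul_of_nonneg_left
          (Finset.sum_le_sum_of_subset_of_nonneg (Finset.erase_subset _ _)
            fun i _ _ => abs_nonneg _) hC
    _ ≤ C * VWR D s γ κ Q := by
        refine mul_le_mul_of_nonneg_left ?_ hC
        rw [VWR]
        exact le_ciSup (f := fun j : Fin K => ∑ i : Fin K, |Mbar D s γ κ Q i j|)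
          (Set.Finite.bddAbove (Set.finite_range _)) j
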